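/- Let X₀ = √−1·diag(−1,−1,2) ∈ su(3). There exist a real number λ ≠ 0, a real number l > 0, and an inner product α on su(3) such that √(α(Y,Y)) + λ·⟨Y,X₀⟩_bi = l for all Y in the adjoint orbit {uX₀u⁻¹ : u ∈ SU(3)} (where ⟨A,B⟩_bi = Re tr(Aᴴ B)), while the function Y ↦ α(Y,Y) is not constant on this orbit. Hence X₀ generates a Killing vector field of constant length for the left-invariant Randers metric F = √(α(·,·)) + λ⟨·,X₀⟩_bi on SU(3) but not of constant length for the underlying Riemannian metric α. -/

import Mathlib

open Matrix

attribute [local instance 100] LieRing.ofAssociativeRing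

/-- The real Lie algebra `su(n)` of traceless skew-Hermitian `n × n` complex matrices,
as a Lie subalgebra of the Lie algebra of all `n × n` complex matrices (with commutator
bracket). -/
def su (n : ℕ) : LieSubalgebra ℝ (Matrix (Fin n) (Fin n) ℂ) where
  carrier := {A | Aᴴ = -A ∧ A.trace = 0}
  add_mem' := by
    rintro A B ⟨hA1, hA2⟩ ⟨hB1, hB2⟩
    constructor
    · simp [conjTranspose_add, hA1, hB1]; abel
    · simp [trace_add, hA2, hB2]
  zero_mem' := by simp
  smul_mem' := by
    rintro c A ⟨hA1, hA2⟩
    constructor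
    · simp [conjTranspose_smul, hA1]
    · simp [trace_smul, hA2]
  lie_mem' := by
    rintro A B ⟨hA1, hA2⟩ ⟨hB1, hB2⟩
    constructor
    · simp only [Ring.lie_def, conjTranspose_sub, conjTranspose_mul, hA1, hB1]
      simp only [mul_neg, neg_mul, neg_sub, neg_neg]
    · simp [Ring.lie_def, trace_sub, trace_mul_comm A B]

/-- The bi-invariant inner product `⟨A, B⟩_bi = Re tr(Aᴴ B)`. -/
noncomputable def binner {n : ℕ} (A B : Matrix (Fin n) (Fin n) ℂ) : ℝ :=
  ((Aᴴ * B).trace).re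

theorem conj_mem_su {n : ℕ} (u : specialUnitaryGroup (Fin n) ℂ) {A : Matrix (Fin n) (Fin n) ℂ}
    (hA : A ∈ su n) : (u : Matrix (Fin n) (Fin n) ℂ) * A * (u : Matrix (Fin n) (Fin n) ℂ)ᴴ ∈ su n := by
  obtain ⟨hA1, hA2⟩ := hA
  have hu : (u : Matrix (Fin n) (Fin n) ℂ)ᴴ * (u : Matrix (Fin n) (Fin n) ℂ) = 1 := by
    have hmem : (u : Matrix (Fin n) (Fin n) ℂ) ∈ unitaryGroup (Fin n) ℂ :=
      (Submonoid.mem_inf.mp u.2).1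
    rw [Matrix.mem_unitaryGroup_iff'] at hmem
    simpa [Matrix.star_eq_conjTranspose] using hmem
  constructor
  · simp only [conjTranspose_mul, conjTranspose_conjTranspose, hA1]
    simp [Matrix.mul_assoc]
  · calc ((u : Matrix (Fin n) (Fin n) ℂ) * A * (u : Matrix (Fin n) (Fin n) ℂ)ᴴ).trace
        = ((u : Matrix (Fin n) (Fin n) ℂ)ᴴ * ((u : Matrix (Fin n) (Fin n) ℂ) * A)).trace := by
          rw [trace_mul_comm]
      _ = A.trace := by rw [← Matrix.mul_assoc, hu, Matrix.one_mul]
      _ = 0 := hA2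

/-- The adjoint action of `SU(n)` on `su(n)`: `Ad u X = u X u⁻¹ = u X uᴴ`. -/
noncomputable def Ad {n : ℕ} (u : specialUnitaryGroup (Fin n) ℂ) (X : su n) : su n :=
  ⟨(u : Matrix (Fin n) (Fin n) ℂ) * (X : Matrix (Fin n) (Fin n) ℂ) *
    (u : Matrix (Fin n) (Fin n) ℂ)ᴴ, conj_mem_su u X.2⟩

/-- The matrix `X₀ = √−1·diag(−1,−1,2) ∈ su(3)`. -/
noncomputable def X₀ : su 3 :=
  ⟨Matrix.diagonal ![-Complex.I, -Complex.I, 2 * Complex.I], by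
    constructor
    · ext i j
      fin_cases i <;> fin_cases j <;>
        simp [Matrix.diagonal, Matrix.conjTranspose_apply]
    · simp [Matrix.trace_diagonal, Fin.sum_univ_three]
      ring⟩


/-! ### Auxiliary definitions and lemmas -/

noncomputable def M0 : Matrix (Fin 3) (Fin 3) ℂ := (X₀ : Matrix (Fin 3) (Fin 3) ℂ)

lemma M0_eq : M0 = Matrix.diagonal ![-Complex.I, -Complex.I, 2 * Complex.I] := rfl

noncomputable def qf (A B : Matrix (Fin 3) (Fin 3) ℂ) : ℝ := ((Aᴴ * B * M0).trace).im

lemma qf_add_left (A B C : Matrix (Fin 3) (Fin 3) ℂ) : qf (A + B) C = qf A C + qf B C := by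
  simp [qf, conjTranspose_add, add_mul, trace_add]

lemma qf_add_right (A B C : Matrix (Fin 3) (Fin 3) ℂ) : qf A (B + C) = qf A B + qf A C := by
  simp [qf, mul_add, add_mul, trace_add]

lemma qf_smul_left (r : ℝ) (A C : Matrix (Fin 3) (Fin 3) ℂ) : qf (r • A) C = r * qf A C := by
  simp [qf, conjTranspose_smul, smul_mul_assoc, trace_smul, Complex.real_smul]

lemma qf_smul_right (r : ℝ) (A C : Matrix (Fin 3) (Fin 3) ℂ) : qf A (r • C) = r * qf A C := by
  simp [qf, smul_mul_assoc, mul_smul_comm, trace_smul, Complex.real_smul]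

lemma binner_add_left {n : ℕ} (A B C : Matrix (Fin n) (Fin n) ℂ) :
    binner (A + B) C = binner A C + binner B C := by
  simp [binner, conjTranspose_add, add_mul]

lemma binner_add_right {n : ℕ} (A B C : Matrix (Fin n) (Fin n) ℂ) :
    binner A (B + C) = binner A B + binner A C := by
  simp [binner, mul_add]

lemma binner_smul_left {n : ℕ} (r : ℝ) (A C : Matrix (Fin n) (Fin n) ℂ) :
    binner (r • A) C = r * binner A C := by
  simp [binner, conjTranspose_smul, smul_mul_assoc, Complex.real_smul]

lemma binner_smul_right {n : ℕ} (r : ℝ) (A C : Matrix (Fin n) (Fin n) ℂ) :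
    binner A (r • C) = r * binner A C := by
  simp [binner, mul_smul_comm, Complex.real_smul]

lemma binner_sub_left {n : ℕ} (A B C : Matrix (Fin n) (Fin n) ℂ) :
    binner (A - B) C = binner A C - binner B C := by
  simp [binner, conjTranspose_sub, sub_mul]

lemma binner_sub_right {n : ℕ} (A B C : Matrix (Fin n) (Fin n) ℂ) :
    binner A (B - C) = binner A B - binner A C := by
  simp [binner, mul_sub]

lemma binner_comm {n : ℕ} (A B : Matrix (Fin n) (Fin n) ℂ) : binner A B = binner B A := by
  unfold binner
  have : (Bᴴ * A).trace = star ((Aᴴ * B).trace) := by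
    rw [← trace_conjTranspose]
    simp [conjTranspose_mul]
  rw [this]; simp [Complex.star_def]

lemma binner_nonneg {n : ℕ} (A : Matrix (Fin n) (Fin n) ℂ) : 0 ≤ binner A A := by
  unfold binner
  rw [trace, Complex.re_sum]
  refine Finset.sum_nonneg fun j _ => ?_
  simp only [diag_apply, mul_apply, conjTranspose_apply]
  rw [Complex.re_sum]
  refine Finset.sum_nonneg fun i _ => ?_
  simp [← Complex.normSq_eq_conj_mul_self, Complex.normSq_nonneg]

lemma binner_self_pos {n : ℕ} {A : Matrix (Fin n) (Fin n) ℂ} (hA : A ≠ 0) :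
    0 < binner A A := by
  have hform : binner A A = ∑ j, ∑ i, Complex.normSq (A i j) := by
    unfold binner
    rw [trace, Complex.re_sum]
    refine Finset.sum_congr rfl fun j _ => ?_
    simp only [diag_apply, mul_apply, conjTranspose_apply]
    rw [Complex.re_sum]
    refine Finset.sum_congr rfl fun i _ => ?_
    simp [Complex.star_def, ← Complex.normSq_eq_conj_mul_self]
  rcases le_or_gt (binner A A) 0 with h | h
  · exfalso
    apply hA
    have h0 : binner A A = 0 := le_antisymm h (binner_nonneg A)
    rw [hform] at h0
    ext i j
    have hj := (Finset.sum_eq_zero_iff_of_nonneg (fun j _ =>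
      Finset.sum_nonneg fun i _ => Complex.normSq_nonneg (A i j))).mp h0 j (Finset.mem_univ j)
    have hij := (Finset.sum_eq_zero_iff_of_nonneg (fun i _ =>
      Complex.normSq_nonneg (A i j))).mp hj i (Finset.mem_univ i)
    simpa using Complex.normSq_eq_zero.mp hij
  · exact h

lemma M0_sq : M0 * M0 = Complex.I • M0 - (2:ℂ) • 1 := by
  rw [M0_eq]
  ext i j
  fin_cases i <;> fin_cases j <;>
    simp [Matrix.diagonal, Matrix.one_apply, Matrix.mul_apply, Fin.sum_univ_three] <;> ring_nf <;>
    simp [Complex.I_sq] <;> ring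

lemma M0_trace : M0.trace = 0 := by
  simp [M0_eq, Matrix.trace_diagonal, Fin.sum_univ_three]; ring

lemma binner_M0_M0 : binner M0 M0 = 6 := by
  simp [binner, M0_eq, Matrix.trace, Matrix.diag, Matrix.mul_apply, Fin.sum_univ_three,
    Matrix.conjTranspose_apply, Matrix.diagonal]
  norm_num [Complex.ext_iff]

lemma q_bound (x : Matrix (Fin 3) (Fin 3) ℂ) : |qf x x| ≤ 2 * binner x x := by
  set s : Fin 3 → ℝ := fun k => ∑ i, Complex.normSq (x i k) with hs_def
  have hs : ∀ k, 0 ≤ s k := fun k => Finset.sum_nonneg fun i _ => Complex.normSq_nonneg _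
  have hN : ∀ k, (xᴴ * x) k k = (s k : ℂ) := by
    intro k
    simp only [mul_apply, conjTranspose_apply, hs_def]
    push_cast
    refine Finset.sum_congr rfl fun i _ => ?_
    rw [Complex.normSq_eq_conj_mul_self]
    rfl
  have htr : (xᴴ * x * M0).trace
      = (s 0 : ℂ) * (-Complex.I) + (s 1 : ℂ) * (-Complex.I) + (s 2 : ℂ) * (2 * Complex.I) := by
    rw [trace]
    simp [M0_eq, Matrix.mul_diagonal, Fin.sum_univ_three, hN]
  have hb : binner x x = s 0 + s 1 + s 2 := by
    simp [binner, trace, Fin.sum_univ_three, hN]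
  have him : qf x x = -(s 0) - s 1 + 2 * s 2 := by
    rw [qf, htr]; simp; ring
  rw [him, hb, abs_le]
  constructor <;> nlinarith [hs 0, hs 1, hs 2]

lemma su_coe_smul (r : ℝ) (x : su 3) :
    ((r • x : su 3) : Matrix (Fin 3) (Fin 3) ℂ) = r • (x : Matrix (Fin 3) (Fin 3) ℂ) := rfl

noncomputable def alphaFun (x y : su 3) : ℝ :=
  6 * binner (x : Matrix (Fin 3) (Fin 3) ℂ) (y : Matrix (Fin 3) (Fin 3) ℂ)
    - (3/50) * (qf (x : Matrix (Fin 3) (Fin 3) ℂ) (y : Matrix (Fin 3) (Fin 3) ℂ)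
        + qf (y : Matrix (Fin 3) (Fin 3) ℂ) (x : Matrix (Fin 3) (Fin 3) ℂ))
    + (1/10000) * (binner (x : Matrix (Fin 3) (Fin 3) ℂ) M0 * binner (y : Matrix (Fin 3) (Fin 3) ℂ) M0)

noncomputable def alphaL : (su 3) →ₗ[ℝ] (su 3) →ₗ[ℝ] ℝ :=
  LinearMap.mk₂ ℝ alphaFun
    (fun x x' y => by
      simp [alphaFun, binner_add_left, binner_add_right, qf_add_left, qf_add_right]
      ring)
    (fun r x y => by
      simp [alphaFun, binner_smul_left, binner_smul_right, qf_smul_left, qf_smul_right, su_coe_smul]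
      ring)
    (fun x y y' => by
      simp [alphaFun, binner_add_left, binner_add_right, qf_add_left, qf_add_right]
      ring)
    (fun r x y => by
      simp [alphaFun, binner_smul_left, binner_smul_right, qf_smul_left, qf_smul_right, su_coe_smul]
      ring)

lemma alphaL_apply (x y : su 3) : alphaL x y = alphaFun x y := rfl

section orbit

lemma orbit_sq (u : specialUnitaryGroup (Fin 3) ℂ) :
    ((Ad u X₀ : su 3) : Matrix (Fin 3) (Fin 3) ℂ) * ((Ad u X₀ : su 3) : Matrix (Fin 3) (Fin 3) ℂ)
      = Complex.I • ((Ad u X₀ : su 3) : Matrix (Fin 3) (Fin 3) ℂ) - (2:ℂ) • 1 := by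
  set U : Matrix (Fin 3) (Fin 3) ℂ := (u : Matrix (Fin 3) (Fin 3) ℂ) with hU
  have hmem : U ∈ unitaryGroup (Fin 3) ℂ := (Submonoid.mem_inf.mp u.2).1
  have hu1 : Uᴴ * U = 1 := by
    have := Matrix.mem_unitaryGroup_iff'.mp hmem
    simpa [Matrix.star_eq_conjTranspose] using this
  have hu2 : U * Uᴴ = 1 := by
    have := Matrix.mem_unitaryGroup_iff.mp hmem
    simpa [Matrix.star_eq_conjTranspose] using this
  have h1 : ∀ X : Matrix (Fin 3) (Fin 3) ℂ, Uᴴ * (U * X) = X := fun X => by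
    rw [← Matrix.mul_assoc, hu1, Matrix.one_mul]
  show (U * M0 * Uᴴ) * (U * M0 * Uᴴ) = Complex.I • (U * M0 * Uᴴ) - (2:ℂ) • 1
  calc (U * M0 * Uᴴ) * (U * M0 * Uᴴ)
      = U * (M0 * (Uᴴ * (U * (M0 * Uᴴ)))) := by simp only [Matrix.mul_assoc]
    _ = U * (M0 * M0) * Uᴴ := by rw [h1]; simp only [Matrix.mul_assoc]
    _ = U * (Complex.I • M0 - (2:ℂ) • 1) * Uᴴ := by rw [M0_sq]
    _ = Complex.I • (U * M0 * Uᴴ) - (2:ℂ) • 1 := by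
        simp [Matrix.mul_sub, Matrix.sub_mul, smul_mul_assoc, mul_smul_comm, hu2]

lemma orbit_formula (Y : su 3) (hY : ∃ u : specialUnitaryGroup (Fin 3) ℂ, Y = Ad u X₀) :
    binner (Y : Matrix (Fin 3) (Fin 3) ℂ) (Y : Matrix (Fin 3) (Fin 3) ℂ) = 6 ∧
    qf (Y : Matrix (Fin 3) (Fin 3) ℂ) (Y : Matrix (Fin 3) (Fin 3) ℂ)
      = binner (Y : Matrix (Fin 3) (Fin 3) ℂ) M0 := by
  obtain ⟨u, rfl⟩ := hY
  set Y : Matrix (Fin 3) (Fin 3) ℂ := ((Ad u X₀ : su 3) : Matrix (Fin 3) (Fin 3) ℂ) with hYdef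
  have hmem := (Ad u X₀).2
  have hYs : Yᴴ = -Y := hmem.1
  have htr : Y.trace = 0 := hmem.2
  have hY2 : Y * Y = Complex.I • Y - (2:ℂ) • 1 := orbit_sq u
  have h : Yᴴ * Y = (2:ℂ) • 1 - Complex.I • Y := by
    rw [hYs, neg_mul, hY2]; abel
  constructor
  · unfold binner
    rw [h]
    simp [trace_sub, trace_smul, htr]
    norm_num
  · have h2 : (Yᴴ * Y * M0).trace = Complex.I * ((Yᴴ * M0).trace) := by
      rw [h, hYs]
      simp [sub_mul, smul_mul_assoc, trace_sub, trace_smul, M0_trace, trace_neg]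
    unfold qf
    rw [h2]
    simp [binner, Complex.mul_im]

lemma orbit_t_bound (Y : su 3) (hY : ∃ u : specialUnitaryGroup (Fin 3) ℂ, Y = Ad u X₀) :
    |binner (Y : Matrix (Fin 3) (Fin 3) ℂ) M0| ≤ 6 := by
  have h6 := (orbit_formula Y hY).1
  have hplus := binner_nonneg ((Y : Matrix (Fin 3) (Fin 3) ℂ) + M0)
  have hminus := binner_nonneg ((Y : Matrix (Fin 3) (Fin 3) ℂ) - M0)
  rw [binner_add_left, binner_add_right, binner_add_right] at hplus
  rw [binner_sub_left, binner_sub_right, binner_sub_right] at hminus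
  have hcomm := binner_comm M0 (Y : Matrix (Fin 3) (Fin 3) ℂ)
  rw [abs_le]
  constructor <;> nlinarith [binner_M0_M0, h6]

lemma orbit_alpha (Y : su 3) (hY : ∃ u : specialUnitaryGroup (Fin 3) ℂ, Y = Ad u X₀) :
    alphaL Y Y = (6 - (1/100) * binner (Y : Matrix (Fin 3) (Fin 3) ℂ) M0)^2 := by
  obtain ⟨h6, hq⟩ := orbit_formula Y hY
  rw [alphaL_apply, alphaFun, h6, hq]
  ring

end orbit

/-- there exist `λ ≠ 0`, `l > 0` and an inner product `α` on `su(3)` such that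
`√(α(Y,Y)) + λ·⟨Y,X₀⟩_bi = l` on the adjoint orbit of `X₀`, while `Y ↦ α(Y,Y)` is not
constant on this orbit. -/
theorem stmt_12 :
    ∃ (lam l : ℝ) (α : (su 3) →ₗ[ℝ] (su 3) →ₗ[ℝ] ℝ),
      lam ≠ 0 ∧ 0 < l ∧
      (∀ x y : su 3, α x y = α y x) ∧
      (∀ x : su 3, x ≠ 0 → 0 < α x x) ∧
      (∀ Y : su 3, (∃ u : specialUnitaryGroup (Fin 3) ℂ, Y = Ad u X₀) →
        Real.sqrt (α Y Y) +
          lam * binner (Y : Matrix (Fin 3) (Fin 3) ℂ) (X₀ : Matrix (Fin 3) (Fin 3) ℂ) = l) ∧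
      ¬ (∃ c : ℝ, ∀ Y : su 3, (∃ u : specialUnitaryGroup (Fin 3) ℂ, Y = Ad u X₀) →
          α Y Y = c) := by
  classical
  refine ⟨1/100, 6, alphaL, by norm_num, by norm_num, ?_, ?_, ?_, ?_⟩
  · -- symmetry
    intro x y
    rw [alphaL_apply, alphaL_apply, alphaFun, alphaFun,
      binner_comm (x : Matrix (Fin 3) (Fin 3) ℂ) (y : Matrix (Fin 3) (Fin 3) ℂ)]
    ring
  · -- positive definiteness
    intro x hx
    have hx' : (x : Matrix (Fin 3) (Fin 3) ℂ) ≠ 0 := by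
      intro h
      exact hx (Subtype.ext h)
    have hb : 0 < binner (x : Matrix (Fin 3) (Fin 3) ℂ) (x : Matrix (Fin 3) (Fin 3) ℂ) :=
      binner_self_pos hx'
    have hq := abs_le.mp (q_bound (x : Matrix (Fin 3) (Fin 3) ℂ))
    rw [alphaL_apply, alphaFun]
    nlinarith [sq_nonneg (binner (x : Matrix (Fin 3) (Fin 3) ℂ) M0)]
  · -- constant F on the orbit
    intro Y hY
    have hX0 : (X₀ : Matrix (Fin 3) (Fin 3) ℂ) = M0 := rfl
    rw [hX0]
    set t : ℝ := binner (Y : Matrix (Fin 3) (Fin 3) ℂ) M0 with ht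
    have htb := orbit_t_bound Y hY
    have ha := orbit_alpha Y hY
    rw [ha]
    rw [Real.sqrt_sq (by rw [abs_le] at htb; linarith)]
    ring
  · -- α not constant on the orbit
    rintro ⟨c, hc⟩
    -- first point : Y = X₀ (u = 1)
    have h1 : (Ad (1 : specialUnitaryGroup (Fin 3) ℂ) X₀ : su 3) = X₀ := by
      apply Subtype.ext
      show (1 : Matrix (Fin 3) (Fin 3) ℂ) * M0 * (1 : Matrix (Fin 3) (Fin 3) ℂ)ᴴ = M0
      simp
    have hX0orbit : ∃ u : specialUnitaryGroup (Fin 3) ℂ, X₀ = Ad u X₀ := ⟨1, h1.symm⟩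
    have ht1 : binner ((X₀ : su 3) : Matrix (Fin 3) (Fin 3) ℂ) M0 = 6 := binner_M0_M0
    have hc1 : c = (6 - (1/100) * 6)^2 := by
      rw [← hc X₀ hX0orbit, orbit_alpha X₀ hX0orbit, ht1]
    -- second point : conjugation by the signed permutation matrix
    set U2 : Matrix (Fin 3) (Fin 3) ℂ := !![0,0,1;0,-1,0;1,0,0] with hU2
    have hU2unitary : U2 ∈ unitaryGroup (Fin 3) ℂ := by
      rw [Matrix.mem_unitaryGroup_iff']
      ext i j
      fin_cases i <;> fin_cases j <;>
        simp [hU2, Matrix.mul_apply, Fin.sum_univ_three, Matrix.one_apply,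
          Matrix.star_eq_conjTranspose, Matrix.conjTranspose_apply,
          Matrix.vecHead, Matrix.vecTail]
    have hU2det : U2.det = 1 := by
      simp [hU2, Matrix.det_fin_three]
    have hU2mem : U2 ∈ specialUnitaryGroup (Fin 3) ℂ :=
      mem_specialUnitaryGroup_iff.mpr ⟨hU2unitary, hU2det⟩
    set u2 : specialUnitaryGroup (Fin 3) ℂ := ⟨U2, hU2mem⟩ with hu2def
    set Y2 : su 3 := Ad u2 X₀ with hY2def
    have hY2orbit : ∃ u : specialUnitaryGroup (Fin 3) ℂ, Y2 = Ad u X₀ := ⟨u2, rfl⟩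
    have ht2 : binner ((Y2 : su 3) : Matrix (Fin 3) (Fin 3) ℂ) M0 = -3 := by
      show binner (U2 * M0 * U2ᴴ) M0 = -3
      have hY2val : U2 * M0 * U2ᴴ
          = Matrix.diagonal ![2 * Complex.I, -Complex.I, -Complex.I] := by
        ext i j
        fin_cases i <;> fin_cases j <;>
          simp [hU2, M0_eq, Matrix.mul_apply, Fin.sum_univ_three,
            Matrix.conjTranspose_apply, Matrix.diagonal, Matrix.vecHead, Matrix.vecTail]
      rw [hY2val, M0_eq]
      simp [binner, Matrix.trace, Matrix.diag, Matrix.mul_apply, Fin.sum_univ_three,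
        Matrix.conjTranspose_apply, Matrix.diagonal]
      norm_num
    have hc2 : c = (6 - (1/100) * (-3))^2 := by
      rw [← hc Y2 hY2orbit, orbit_alpha Y2 hY2orbit, ht2]
    rw [hc1] at hc2
    norm_num at hc2
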